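/- Let a, b be positive integers with a + b = n. The meander graph M(a, b | n) consists of a single path if and only if gcd(a, n) = 1. -/

import Mathlib

/-- Two (1-based) positions `u v` are joined by an arc determined by the
composition `L`: they lie in a common block of `L` and are reflections of each
other across the middle of that block. -/
def blockAdj (L : List ℕ) (u v : ℕ) : Prop :=
  ∃ k < L.length,
    (L.take k).sum < u ∧ u ≤ (L.take (k + 1)).sum ∧
    (L.take k).sum < v ∧ v ≤ (L.take (k + 1)).sum ∧
    u + v = (L.take k).sum + (L.take (k + 1)).sum + 1 ∧ u ≠ v

/-- The meander graph `M(x | y)` on vertices `{1, …, n}` (represented by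
`Fin n`, vertex `i` corresponding to the number `i + 1`): top edges come from
the blocks of `x`, bottom edges from the blocks of `y`. -/
def meander (x y : List ℕ) (n : ℕ) : SimpleGraph (Fin n) where
  Adj i j := blockAdj x ((i : ℕ) + 1) ((j : ℕ) + 1) ∨ blockAdj y ((i : ℕ) + 1) ((j : ℕ) + 1)
  symm := by
    constructor
    rintro i j (⟨k, hk, h1, h2, h3, h4, h5, h6⟩ | ⟨k, hk, h1, h2, h3, h4, h5, h6⟩)
    · exact Or.inl ⟨k, hk, h3, h4, h1, h2, by omega, by omega⟩
    · exact Or.inr ⟨k, hk, h3, h4, h1, h2, by omega, by omega⟩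
  loopless := by
    constructor
    rintro i (⟨k, hk, h1, h2, h3, h4, h5, h6⟩ | ⟨k, hk, h1, h2, h3, h4, h5, h6⟩) <;> omega

/-- A graph on `Fin n` consists of a single path when it is isomorphic to the
path graph on `n` vertices. -/
def IsSinglePath {n : ℕ} (G : SimpleGraph (Fin n)) : Prop :=
  Nonempty (G ≃g SimpleGraph.pathGraph n)


/-- resolve a ZMod n equality between small naturals -/
lemma cast_eq_resolve {n : ℕ} (hn : 2 ≤ n) {s x : ℕ} (hs : s ≤ 2*n) (hx : x ≤ 2*n)
    (h : (s : ZMod n) = (x : ZMod n)) :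
    s = x ∨ s = x + n ∨ x = s + n ∨ s = x + 2*n ∨ x = s + 2*n := by
  haveI : NeZero n := ⟨by omega⟩
  have h' : s % n = x % n := by
    have := congrArg ZMod.val h
    rwa [ZMod.val_natCast, ZMod.val_natCast] at this
  have hs1 := Nat.div_add_mod s n
  have hx1 := Nat.div_add_mod x n
  have hsm : s % n < n := Nat.mod_lt _ (by omega)
  have hxm : x % n < n := Nat.mod_lt _ (by omega)
  have hsd : s / n ≤ 2 := by
    calc s / n ≤ 2*n/n := Nat.div_le_div_right hs
    _ = 2 := Nat.mul_div_cancel 2 (by omega)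
  have hxd : x / n ≤ 2 := by
    calc x / n ≤ 2*n/n := Nat.div_le_div_right hx
    _ = 2 := Nat.mul_div_cancel 2 (by omega)
  set q := s / n with hq
  set q' := x / n with hq'
  clear_value q q'
  interval_cases q <;> interval_cases q' <;> omega

lemma meander_adj_iff {a b n : ℕ} (ha : 0 < a) (hb : 0 < b) (hab : a + b = n)
    (i j : Fin n) :
    (meander [a, b] [n] n).Adj i j ↔ (i : ℕ) ≠ (j : ℕ) ∧
      ((i : ℕ) + (j : ℕ) + 2 = a + 1 ∨ (i : ℕ) + (j : ℕ) + 2 = a + n + 1 ∨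
        (i : ℕ) + (j : ℕ) + 2 = n + 1) := by
  have hi := i.isLt
  have hj := j.isLt
  constructor
  · rintro (⟨k, hk, h⟩ | ⟨k, hk, h⟩)
    · rcases k with _ | _ | k
      · simp at h; omega
      · simp at h; omega
      · exact absurd hk (by norm_num)
    · rcases k with _ | k
      · simp at h; omega
      · exact absurd hk (by norm_num)
  · rintro ⟨hne, h | h | h⟩
    · exact Or.inl ⟨0, by simp, by simp; omega⟩
    · exact Or.inl ⟨1, by simp, by simp; omega⟩
    · exact Or.inr ⟨0, by simp, by simp; omega⟩

lemma exists_iso {a b n : ℕ} (ha : 0 < a) (hb : 0 < b) (hab : a + b = n)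
    (hg : Nat.gcd a n = 1) :
    Nonempty (meander [a, b] [n] n ≃g SimpleGraph.pathGraph n) := by
  have hn2 : 2 ≤ n := by omega
  have han : a < n := by omega
  haveI : NeZero n := ⟨by omega⟩
  have hunit : IsUnit (a : ZMod n) := (ZMod.isUnit_iff_coprime a n).mpr hg
  have hz : ∀ m : ℕ, (m : ZMod n) * (a : ZMod n) = 0 → n ∣ m := by
    intro m h
    have h0 : (m : ZMod n) * (a : ZMod n) = 0 * (a : ZMod n) := by rw [h, zero_mul]
    have := hunit.mul_right_cancel h0
    exact (ZMod.natCast_eq_zero_iff m n).mp this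
  have hcan : ∀ m m' : ℕ, m < n → m' < n →
      (m : ZMod n) * (a : ZMod n) = (m' : ZMod n) * (a : ZMod n) → m = m' := by
    intro m m' hm hm' h
    have := hunit.mul_right_cancel h
    have h1 : (m : ZMod n).val = (m' : ZMod n).val := by rw [this]
    rwa [ZMod.val_cast_of_lt hm, ZMod.val_cast_of_lt hm'] at h1
  -- a "half" of a+1 mod n
  obtain ⟨c, hc⟩ : ∃ c : ZMod n, c + c = (a : ZMod n) + 1 := by
    by_cases hpa : a % 2 = 1
    · refine ⟨((a+1)/2 : ℕ), ?_⟩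
      have h1 : (a+1)/2 + (a+1)/2 = a + 1 := by omega
      calc ((((a+1)/2 : ℕ)) : ZMod n) + (((a+1)/2 : ℕ) : ZMod n)
          = (((a+1)/2 + (a+1)/2 : ℕ) : ZMod n) := by push_cast; ring
        _ = ((a + 1 : ℕ) : ZMod n) := by rw [h1]
        _ = (a : ZMod n) + 1 := by push_cast; ring
    · -- a even, so n odd
      have hno : n % 2 = 1 := by
        rcases Nat.even_or_odd n with he | ho
        · exfalso
          have h2 : (2 : ℕ) ∣ Nat.gcd a n :=
            Nat.dvd_gcd (by omega) he.two_dvd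
          omega
        · exact Nat.odd_iff.mp ho
      refine ⟨((a+n+1)/2 : ℕ), ?_⟩
      have h1 : (a+n+1)/2 + (a+n+1)/2 = a + n + 1 := by omega
      calc ((((a+n+1)/2 : ℕ)) : ZMod n) + (((a+n+1)/2 : ℕ) : ZMod n)
          = (((a+n+1)/2 + (a+n+1)/2 : ℕ) : ZMod n) := by push_cast; ring
        _ = ((a + n + 1 : ℕ) : ZMod n) := by rw [h1]
        _ = (a : ZMod n) + 1 := by push_cast [ZMod.natCast_self]; ring
  set el : ℕ → ZMod n := fun k =>
    if k % 2 = 0 then c + (k/2 : ℕ) * (a : ZMod n) else 1 - (c + (k/2 : ℕ) * (a : ZMod n))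
    with hel
  have hele : ∀ k : ℕ, k % 2 = 0 → el k = c + (k/2 : ℕ) * (a : ZMod n) := by
    intro k hk; simp [hel, hk]
  have helo : ∀ k : ℕ, k % 2 = 1 → el k = 1 - (c + (k/2 : ℕ) * (a : ZMod n)) := by
    intro k hk; simp [hel, hk]
  have hinj : ∀ k, k < n → ∀ k', k' < n → el k = el k' → k = k' := by
    intro k hk k' hk' he
    by_cases p : k % 2 = 0 <;> by_cases p' : k' % 2 = 0
    · rw [hele k p, hele k' p'] at he
      have h2 : ((k/2 : ℕ) : ZMod n) * (a : ZMod n) = ((k'/2 : ℕ) : ZMod n) * (a : ZMod n) := by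
        linear_combination he
      have := hcan _ _ (by omega) (by omega) h2
      omega
    · rw [hele k p, helo k' (by omega)] at he
      have h2 : ((k/2 + k'/2 + 1 : ℕ) : ZMod n) * (a : ZMod n) = 0 := by
        push_cast; linear_combination he - hc
      have := Nat.le_of_dvd (by omega) (hz _ h2)
      omega
    · rw [helo k (by omega), hele k' p'] at he
      have h2 : ((k/2 + k'/2 + 1 : ℕ) : ZMod n) * (a : ZMod n) = 0 := by
        push_cast; linear_combination - he - hc
      have := Nat.le_of_dvd (by omega) (hz _ h2)
      omega
    · rw [helo k (by omega), helo k' (by omega)] at he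
      have h2 : ((k/2 : ℕ) : ZMod n) * (a : ZMod n) = ((k'/2 : ℕ) : ZMod n) * (a : ZMod n) := by
        linear_combination - he
      have := hcan _ _ (by omega) (by omega) h2
      omega
  set φ : Fin n → Fin n := fun k => ⟨(el (k : ℕ) - 1).val, ZMod.val_lt _⟩ with hφ
  have hval : ∀ i : Fin n, (((φ i : ℕ) + 1 : ℕ) : ZMod n) = el (i : ℕ) := by
    intro i
    show (((el (i : ℕ) - 1).val + 1 : ℕ) : ZMod n) = el (i : ℕ)
    push_cast [ZMod.natCast_zmod_val]
    ring
  have hφinj : Function.Injective φ := by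
    intro i j h
    have h1 : el (i : ℕ) = el (j : ℕ) := by
      have h2 : ((el (i : ℕ) - 1).val : ℕ) = ((el (j : ℕ) - 1).val : ℕ) := congrArg Fin.val h
      have h3 : el (i : ℕ) - 1 = el (j : ℕ) - 1 := by
        rw [← ZMod.natCast_zmod_val (el (i : ℕ) - 1), ← ZMod.natCast_zmod_val (el (j : ℕ) - 1), h2]
      linear_combination h3
    exact Fin.ext (hinj _ i.isLt _ j.isLt h1)
  have hbij : Function.Bijective φ := (Finite.injective_iff_bijective).mp hφinj
  -- one step of the path
  have step : ∀ i j : Fin n, (i : ℕ) + 1 = (j : ℕ) →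
      ((φ i : ℕ) + (φ j : ℕ) + 2 = a + 1 ∨ (φ i : ℕ) + (φ j : ℕ) + 2 = a + n + 1 ∨
        (φ i : ℕ) + (φ j : ℕ) + 2 = n + 1) := by
    intro i j hij
    have hUV : (((φ i : ℕ) + 1 + ((φ j : ℕ) + 1) : ℕ) : ZMod n) = el (i : ℕ) + el (j : ℕ) := by
      rw [Nat.cast_add, hval i, hval j]
    have hb1 : (φ i : ℕ) < n := (φ i).isLt
    have hb2 : (φ j : ℕ) < n := (φ j).isLt
    by_cases p : (i : ℕ) % 2 = 0
    · have hsum : el (i : ℕ) + el (j : ℕ) = 1 := by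
        rw [hele _ p, helo _ (by omega)]
        have : (j : ℕ)/2 = (i : ℕ)/2 := by omega
        rw [this]; ring
      have hres := cast_eq_resolve hn2 (s := (φ i : ℕ) + 1 + ((φ j : ℕ) + 1)) (x := n + 1)
        (by omega) (by omega) (by rw [hUV, hsum]; push_cast [ZMod.natCast_self]; ring)
      omega
    · have hsum : el (i : ℕ) + el (j : ℕ) = (a : ZMod n) + 1 := by
        rw [helo _ (by omega), hele _ (by omega)]
        have : (j : ℕ)/2 = (i : ℕ)/2 + 1 := by omega
        rw [this]; push_cast; ring
      have hres := cast_eq_resolve hn2 (s := (φ i : ℕ) + 1 + ((φ j : ℕ) + 1)) (x := a + 1)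
        (by omega) (by omega) (by rw [hUV, hsum]; push_cast; ring)
      omega
  have hadj : ∀ i j : Fin n,
      (meander [a, b] [n] n).Adj (φ i) (φ j) ↔ (SimpleGraph.pathGraph n).Adj i j := by
    intro i j
    rw [meander_adj_iff ha hb hab, SimpleGraph.pathGraph_adj]
    constructor
    · rintro ⟨hne, hsum⟩
      have hij : (i : ℕ) ≠ (j : ℕ) := by
        intro hh; exact hne (congrArg Fin.val (congrArg φ (Fin.ext hh)))
      have hUV : (((φ i : ℕ) + 1 + ((φ j : ℕ) + 1) : ℕ) : ZMod n) = el (i : ℕ) + el (j : ℕ) := by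
        rw [Nat.cast_add, hval i, hval j]
      have key : el (i : ℕ) + el (j : ℕ) = 1 ∨ el (i : ℕ) + el (j : ℕ) = (a : ZMod n) + 1 := by
        rcases hsum with h | h | h
        · right
          rw [← hUV, show (φ i : ℕ) + 1 + ((φ j : ℕ) + 1) = a + 1 by omega]
          push_cast; ring
        · right
          rw [← hUV, show (φ i : ℕ) + 1 + ((φ j : ℕ) + 1) = a + n + 1 by omega]
          push_cast [ZMod.natCast_self]; ring
        · left
          rw [← hUV, show (φ i : ℕ) + 1 + ((φ j : ℕ) + 1) = n + 1 by omega]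
          push_cast [ZMod.natCast_self]; ring
      have hi := i.isLt
      have hj := j.isLt
      by_cases p : (i : ℕ) % 2 = 0 <;> by_cases p' : (j : ℕ) % 2 = 0
      · exfalso
        rw [hele _ p, hele _ p'] at key
        rcases key with h | h
        · have h2 : (((i:ℕ)/2 + (j:ℕ)/2 + 1 : ℕ) : ZMod n) * (a : ZMod n) = 0 := by
            push_cast; linear_combination h - hc
          have := Nat.le_of_dvd (by omega) (hz _ h2)
          omega
        · have h2 : (((i:ℕ)/2 + (j:ℕ)/2 : ℕ) : ZMod n) * (a : ZMod n) = 0 := by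
            push_cast; linear_combination h - hc
          rcases Nat.eq_zero_or_pos ((i:ℕ)/2 + (j:ℕ)/2) with h0 | h0
          · omega
          · have := Nat.le_of_dvd h0 (hz _ h2)
            omega
      · rw [hele _ p, helo _ (by omega)] at key
        rcases key with h | h
        · have h2 : (((i:ℕ)/2 : ℕ) : ZMod n) * (a : ZMod n)
              = (((j:ℕ)/2 : ℕ) : ZMod n) * (a : ZMod n) := by
            linear_combination h
          have := hcan _ _ (by omega) (by omega) h2
          omega
        · have h2 : (((i:ℕ)/2 : ℕ) : ZMod n) * (a : ZMod n)
              = (((j:ℕ)/2 + 1 : ℕ) : ZMod n) * (a : ZMod n) := by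
            push_cast; linear_combination h
          have := hcan _ _ (by omega) (by omega) h2
          omega
      · rw [helo _ (by omega), hele _ p'] at key
        rcases key with h | h
        · have h2 : (((j:ℕ)/2 : ℕ) : ZMod n) * (a : ZMod n)
              = (((i:ℕ)/2 : ℕ) : ZMod n) * (a : ZMod n) := by
            linear_combination h
          have := hcan _ _ (by omega) (by omega) h2
          omega
        · have h2 : (((j:ℕ)/2 : ℕ) : ZMod n) * (a : ZMod n)
              = (((i:ℕ)/2 + 1 : ℕ) : ZMod n) * (a : ZMod n) := by
            push_cast; linear_combination h
          have := hcan _ _ (by omega) (by omega) h2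
          omega
      · exfalso
        rw [helo _ (by omega), helo _ (by omega)] at key
        rcases key with h | h
        · have h2 : (((i:ℕ)/2 + (j:ℕ)/2 + 1 : ℕ) : ZMod n) * (a : ZMod n) = 0 := by
            push_cast; linear_combination - h - hc
          have := Nat.le_of_dvd (by omega) (hz _ h2)
          omega
        · have h2 : (((i:ℕ)/2 + (j:ℕ)/2 + 2 : ℕ) : ZMod n) * (a : ZMod n) = 0 := by
            push_cast; linear_combination - h - hc
          have := Nat.le_of_dvd (by omega) (hz _ h2)
          omega
    · intro h
      have hij : (i : ℕ) ≠ (j : ℕ) := by omega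
      have hne : (φ i : ℕ) ≠ (φ j : ℕ) := by
        intro hh
        exact hij (congrArg Fin.val (hφinj (Fin.ext hh)))
      rcases h with h | h
      · exact ⟨hne, step i j h⟩
      · have := step j i h
        exact ⟨hne, by omega⟩
  exact ⟨⟨(Equiv.ofBijective φ hbij).symm, by
    intro u v
    have h1 : φ ((Equiv.ofBijective φ hbij).symm u) = u := (Equiv.ofBijective φ hbij).apply_symm_apply u
    have h2 : φ ((Equiv.ofBijective φ hbij).symm v) = v := (Equiv.ofBijective φ hbij).apply_symm_apply v
    rw [← hadj ((Equiv.ofBijective φ hbij).symm u) ((Equiv.ofBijective φ hbij).symm v), h1, h2]⟩⟩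

lemma not_iso {a b n : ℕ} (ha : 0 < a) (hb : 0 < b) (hab : a + b = n)
    (hg : Nat.gcd a n ≠ 1) :
    ¬ Nonempty (meander [a, b] [n] n ≃g SimpleGraph.pathGraph n) := by
  rintro ⟨e⟩
  set d := Nat.gcd a n with hd
  have hda : d ∣ a := Nat.gcd_dvd_left a n
  have hdn : d ∣ n := Nat.gcd_dvd_right a n
  have hd0 : 0 < d := Nat.gcd_pos_of_pos_left n ha
  have hd2 : 2 ≤ d := by omega
  have hdln : d ≤ n := Nat.le_of_dvd (by omega) hdn
  have hn2 : 2 ≤ n := by omega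
  by_cases hcase : d = 2
  · -- a and n both even: every vertex has two neighbours, but an endpoint of the path has one
    have ha2 : a % 2 = 0 := by
      have : (2 : ℕ) ∣ a := hcase ▸ hda; omega
    have hne2 : n % 2 = 0 := by
      have : (2 : ℕ) ∣ n := hcase ▸ hdn; omega
    set v : Fin n := e.symm ⟨0, by omega⟩ with hv
    have hvlt : (v : ℕ) < n := v.isLt
    set w1 : Fin n := ⟨n - 1 - (v : ℕ), by omega⟩ with hw1
    have hadj1 : (meander [a, b] [n] n).Adj v w1 := by
      rw [meander_adj_iff ha hb hab]
      constructor
      · show (v : ℕ) ≠ n - 1 - (v : ℕ); omega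
      · show ((v:ℕ) + (n - 1 - (v:ℕ)) + 2 = a + 1 ∨ (v:ℕ) + (n - 1 - (v:ℕ)) + 2 = a + n + 1 ∨ (v:ℕ) + (n - 1 - (v:ℕ)) + 2 = n + 1); omega
    by_cases hva : (v : ℕ) + 1 ≤ a
    · set w2 : Fin n := ⟨a - 1 - (v : ℕ), by omega⟩ with hw2
      have hadj2 : (meander [a, b] [n] n).Adj v w2 := by
        rw [meander_adj_iff ha hb hab]
        constructor
        · show (v : ℕ) ≠ a - 1 - (v : ℕ); omega
        · show ((v:ℕ) + (a - 1 - (v:ℕ)) + 2 = a + 1 ∨ (v:ℕ) + (a - 1 - (v:ℕ)) + 2 = a + n + 1 ∨ (v:ℕ) + (a - 1 - (v:ℕ)) + 2 = n + 1); omega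
      have hne : w1 ≠ w2 := by
        intro h
        have h7 : n - 1 - (v : ℕ) = a - 1 - (v : ℕ) := congrArg Fin.val h
        omega
      have h1 : ((e w1 : Fin n) : ℕ) = 1 := by
        have := e.map_rel_iff.mpr hadj1
        rw [hv, e.apply_symm_apply] at this
        rw [SimpleGraph.pathGraph_adj] at this
        have h10 : 1 = ((e w1 : Fin n) : ℕ) := by simpa using this
        omega
      have h2 : ((e w2 : Fin n) : ℕ) = 1 := by
        have := e.map_rel_iff.mpr hadj2
        rw [hv, e.apply_symm_apply] at this
        rw [SimpleGraph.pathGraph_adj] at this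
        have h10 : 1 = ((e w2 : Fin n) : ℕ) := by simpa using this
        omega
      exact hne (e.toEquiv.injective (Fin.ext (h1.trans h2.symm)))
    · set w2 : Fin n := ⟨a + n - 1 - (v : ℕ), by omega⟩ with hw2
      have hadj2 : (meander [a, b] [n] n).Adj v w2 := by
        rw [meander_adj_iff ha hb hab]
        constructor
        · show (v : ℕ) ≠ a + n - 1 - (v : ℕ); omega
        · show ((v:ℕ) + (a + n - 1 - (v:ℕ)) + 2 = a + 1 ∨ (v:ℕ) + (a + n - 1 - (v:ℕ)) + 2 = a + n + 1 ∨ (v:ℕ) + (a + n - 1 - (v:ℕ)) + 2 = n + 1); omega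
      have hne : w1 ≠ w2 := by
        intro h
        have h7 : n - 1 - (v : ℕ) = a + n - 1 - (v : ℕ) := congrArg Fin.val h
        omega
      have h1 : ((e w1 : Fin n) : ℕ) = 1 := by
        have := e.map_rel_iff.mpr hadj1
        rw [hv, e.apply_symm_apply] at this
        rw [SimpleGraph.pathGraph_adj] at this
        have h10 : 1 = ((e w1 : Fin n) : ℕ) := by simpa using this
        omega
      have h2 : ((e w2 : Fin n) : ℕ) = 1 := by
        have := e.map_rel_iff.mpr hadj2
        rw [hv, e.apply_symm_apply] at this
        rw [SimpleGraph.pathGraph_adj] at this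
        have h10 : 1 = ((e w2 : Fin n) : ℕ) := by simpa using this
        omega
      exact hne (e.toEquiv.injective (Fin.ext (h1.trans h2.symm)))
  · -- d ≥ 3 : the meander graph is disconnected
    have hd3 : 3 ≤ d := by omega
    have hn3 : 3 ≤ n := by omega
    haveI : NeZero d := ⟨by omega⟩
    have hca : ((a : ℕ) : ZMod d) = 0 := (ZMod.natCast_eq_zero_iff a d).mpr hda
    have hcn : ((n : ℕ) : ZMod d) = 0 := (ZMod.natCast_eq_zero_iff n d).mpr hdn
    set Q : Fin n → Prop := fun i => (((i : ℕ) + 1 : ℕ) : ZMod d) = 1 ∨ (((i : ℕ) + 1 : ℕ) : ZMod d) = 0 with hQdef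
    have hA : ∀ {i j : Fin n}, (meander [a, b] [n] n).Adj i j →
        (((i : ℕ) + 1 : ℕ) : ZMod d) + (((j : ℕ) + 1 : ℕ) : ZMod d) = 1 := by
      intro i j hij
      rw [meander_adj_iff ha hb hab] at hij
      obtain ⟨-, h⟩ := hij
      rcases h with h | h | h
      · have h4 : (((i:ℕ):ZMod d) + 1) + (((j:ℕ):ZMod d) + 1) = (a : ZMod d) + 1 := by
          exact_mod_cast congrArg (fun t : ℕ => (t : ZMod d))
            (show (i:ℕ)+1+((j:ℕ)+1) = a+1 by omega)
        push_cast
        linear_combination h4 + hca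
      · have h4 : (((i:ℕ):ZMod d) + 1) + (((j:ℕ):ZMod d) + 1) = (a : ZMod d) + (n : ZMod d) + 1 := by
          exact_mod_cast congrArg (fun t : ℕ => (t : ZMod d))
            (show (i:ℕ)+1+((j:ℕ)+1) = a+n+1 by omega)
        push_cast
        linear_combination h4 + hca + hcn
      · have h4 : (((i:ℕ):ZMod d) + 1) + (((j:ℕ):ZMod d) + 1) = (n : ZMod d) + 1 := by
          exact_mod_cast congrArg (fun t : ℕ => (t : ZMod d))
            (show (i:ℕ)+1+((j:ℕ)+1) = n+1 by omega)
        push_cast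
        linear_combination h4 + hcn
    have hQstep : ∀ {i j : Fin n}, (meander [a, b] [n] n).Adj i j → Q i → Q j := by
      intro i j hij hQi
      have h4 := hA hij
      rcases hQi with h | h
      · right; linear_combination h4 - h
      · left; linear_combination h4 - h
    have hwalk : ∀ (x y : Fin n) (w : (meander [a, b] [n] n).Walk x y), Q x → Q y := by
      intro x y w
      induction w with
      | nil => exact id
      | cons h p ih => exact fun hx => ih (hQstep h hx)
    have hreach : (meander [a, b] [n] n).Reachable ⟨0, by omega⟩ ⟨1, by omega⟩ := by
      have hp := SimpleGraph.pathGraph_preconnected n (e ⟨0, by omega⟩) (e ⟨1, by omega⟩)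
      have h5 := hp.map e.symm.toHom
      simpa using h5
    obtain ⟨w⟩ := hreach
    have hQ0 : Q ⟨0, by omega⟩ := by
      left
      show ((0 + 1 : ℕ) : ZMod d) = 1
      push_cast; ring
    have hQ1 := hwalk _ _ w hQ0
    have : ¬ Q ⟨1, by omega⟩ := by
      rintro (h | h)
      · have h6 : ((1 : ℕ) : ZMod d) = 0 := by
          have : ((1 + 1 : ℕ) : ZMod d) = 1 := h
          push_cast at this ⊢
          linear_combination this
        rw [ZMod.natCast_eq_zero_iff] at h6
        have := Nat.le_of_dvd (by omega) h6
        omega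
      · have h6 : ((2 : ℕ) : ZMod d) = 0 := by
          have : ((1 + 1 : ℕ) : ZMod d) = 0 := h
          push_cast at this ⊢
          linear_combination this
        rw [ZMod.natCast_eq_zero_iff] at h6
        have := Nat.le_of_dvd (by omega) h6
        omega
    exact this hQ1

/-- For positive integers `a`, `b` with `a + b = n`, the
meander graph `M(a, b | n)` consists of a single path if and only if
`gcd(a, n) = 1`. -/
theorem meander_maximal_parabolic_isSinglePath_iff
    (a b n : ℕ) (ha : 0 < a) (hb : 0 < b) (hab : a + b = n) :
    IsSinglePath (meander [a, b] [n] n) ↔ Nat.gcd a n = 1 := by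
  constructor
  · intro h
    by_contra hg
    exact not_iso ha hb hab hg h
  · intro hg
    exact exists_iso ha hb hab hg
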